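/- Let g : ℝᵠ → ℝ be μ-strongly convex and L-smooth with minimizer y*, let 0 < λ ≤ 1/(2L + 2μ), 0 < β < 1, and T ≥ 1. Given y₀ ∈ ℝᵠ and directions D₀, …, D_{T-1}, define y_{t+1} = y_t - λβ D_t for t = 0,…,T-1. Then ‖y_T - y*‖² ≤ (1 - (μ/2)λβ)^T ‖y₀ - y*‖² + (4/μ)λβ ∑_{t=0}^{T-1} ‖∇g(y_t) - D_t‖² - (1/2)λ²β ∑_{t=0}^{T-1} (1 - (μ/2)λβ)^{T-1-t} ‖D_t‖². -/

import Mathlib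

open scoped RealInnerProductSpace

private lemma descent_aux {q : ℕ} (g : EuclideanSpace ℝ (Fin q) → ℝ)
    (gradg : EuclideanSpace ℝ (Fin q) → EuclideanSpace ℝ (Fin q))
    (hgrad : ∀ y, HasGradientAt g (gradg y) y)
    (L : ℝ) (hL : 0 < L)
    (hsmooth : ∀ u w, ‖gradg u - gradg w‖ ≤ L * ‖u - w‖)
    (x v : EuclideanSpace ℝ (Fin q)) :
    g (x + v) ≤ g x + ⟪gradg x, v⟫ + L / 2 * ‖v‖ ^ 2 := by
  have hcg : Continuous gradg := by
    have : LipschitzWith L.toNNReal gradg := by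
      apply LipschitzWith.of_dist_le_mul
      intro u w
      simpa [dist_eq_norm, Real.coe_toNNReal L hL.le] using hsmooth u w
    exact this.continuous
  set φ' : ℝ → ℝ := fun t => ⟪gradg (x + t • v), v⟫ with hφ'
  have hderiv : ∀ t : ℝ, HasDerivAt (fun s : ℝ => g (x + s • v)) (φ' t) t := by
    intro t
    have h1 : HasDerivAt (fun s : ℝ => x + s • v) v t := by
      simpa using ((hasDerivAt_id t).smul_const v).const_add x
    have h2 := ((hgrad (x + t • v)).hasFDerivAt.comp_hasDerivAt t h1)
    simp only [InnerProductSpace.toDual_apply_apply] at h2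
    exact h2
  have hcont : Continuous φ' := (hcg.comp (by continuity)).inner continuous_const
  have hint : g (x + v) - g x = ∫ t in (0:ℝ)..1, φ' t := by
    have := intervalIntegral.integral_eq_sub_of_hasDerivAt
      (f := fun s : ℝ => g (x + s • v)) (f' := φ')
      (fun t _ => hderiv t) (hcont.intervalIntegrable 0 1)
    simp at this
    linarith [this]
  have hb : ∫ t in (0:ℝ)..1, φ' t ≤ ∫ t in (0:ℝ)..1, (⟪gradg x, v⟫ + L * t * ‖v‖ ^ 2) := by
    apply intervalIntegral.integral_mono_on (by norm_num)
      (hcont.intervalIntegrable 0 1)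
      (((continuous_const.add (((continuous_const.mul continuous_id).mul continuous_const)))).intervalIntegrable 0 1)
    intro t ht
    rcases ht with ⟨ht0, ht1⟩
    have : φ' t - ⟪gradg x, v⟫ = ⟪gradg (x + t • v) - gradg x, v⟫ := by
      simp [hφ', inner_sub_left]
    have hcs : ⟪gradg (x + t • v) - gradg x, v⟫ ≤ ‖gradg (x + t • v) - gradg x‖ * ‖v‖ :=
      real_inner_le_norm _ _
    have hlip : ‖gradg (x + t • v) - gradg x‖ ≤ L * (t * ‖v‖) := by
      have := hsmooth (x + t • v) x
      simpa [norm_smul, abs_of_nonneg ht0] using this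
    simp only [Pi.add_apply, Pi.mul_apply, id]
    nlinarith [norm_nonneg v, norm_nonneg (gradg (x + t • v) - gradg x)]
  have hval : ∫ t in (0:ℝ)..1, (⟪gradg x, v⟫ + L * t * ‖v‖ ^ 2) = ⟪gradg x, v⟫ + L / 2 * ‖v‖ ^ 2 := by
    have h1 : IntervalIntegrable (fun t : ℝ => L * t * ‖v‖ ^ 2) MeasureTheory.volume 0 1 :=
      ((continuous_const.mul continuous_id).mul continuous_const).intervalIntegrable 0 1
    rw [intervalIntegral.integral_add (intervalIntegrable_const) h1]
    have h2 : (fun t : ℝ => L * t * ‖v‖ ^ 2) = fun t : ℝ => (L * ‖v‖ ^ 2) * t := by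
      funext t; ring
    rw [h2, intervalIntegral.integral_const_mul, integral_id]
    simp
    ring
  linarith [hint, hb, hval.le]

set_option maxHeartbeats 1600000 in
theorem stmt_4 {q : ℕ} (g : EuclideanSpace ℝ (Fin q) → ℝ)
    (gradg : EuclideanSpace ℝ (Fin q) → EuclideanSpace ℝ (Fin q))
    (hgrad : ∀ y, HasGradientAt g (gradg y) y)
    (μ L : ℝ) (hμ : 0 < μ)
    (hsc : ∀ y z, g z ≥ g y + ⟪gradg y, z - y⟫ + (μ / 2) * ‖z - y‖ ^ 2)
    (hsmooth : ∀ u w, ‖gradg u - gradg w‖ ≤ L * ‖u - w‖)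
    (ystar : EuclideanSpace ℝ (Fin q)) (hmin : ∀ z, g ystar ≤ g z)
    (lam β : ℝ) (hlam : 0 < lam) (hlam' : lam ≤ 1 / (2 * L + 2 * μ))
    (hβ : 0 < β) (hβ' : β < 1) (T : ℕ) (hT : 1 ≤ T)
    (y D : ℕ → EuclideanSpace ℝ (Fin q))
    (hiter : ∀ t < T, y (t + 1) = y t - (lam * β) • D t) :
    ‖y T - ystar‖ ^ 2 ≤ (1 - (μ / 2) * lam * β) ^ T * ‖y 0 - ystar‖ ^ 2
      + (4 / μ) * lam * β * ∑ t ∈ Finset.range T, ‖gradg (y t) - D t‖ ^ 2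
      - (1 / 2) * lam ^ 2 * β *
        ∑ t ∈ Finset.range T, (1 - (μ / 2) * lam * β) ^ (T - 1 - t) * ‖D t‖ ^ 2 := by
  rcases Nat.eq_zero_or_pos q with hq | hq
  · -- trivial case: the space is a subsingleton
    subst hq
    have h0 : ∀ u : EuclideanSpace ℝ (Fin 0), ‖u‖ = (0:ℝ) := by
      intro u
      rw [Subsingleton.elim u 0, norm_zero]
    simp [h0]
  -- main case
  -- μ ≤ L
  have hcoer : ∀ u w : EuclideanSpace ℝ (Fin q),
      μ * ‖u - w‖ ^ 2 ≤ ⟪gradg u - gradg w, u - w⟫ := by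
    intro u w
    have h1 := hsc u w
    have h2 := hsc w u
    have e1 : ⟪gradg u, w - u⟫ = - ⟪gradg u, u - w⟫ := by
      rw [show w - u = -(u - w) by abel, inner_neg_right]
    rw [e1, norm_sub_rev w u] at h1
    rw [inner_sub_left]
    linarith [h1, h2]
  have hμL : μ ≤ L := by
    set u : EuclideanSpace ℝ (Fin q) := EuclideanSpace.single ⟨0, hq⟩ 1 with hu
    have hnu : ‖u - 0‖ = 1 := by
      simp [hu, EuclideanSpace.norm_single]
    have h1 := hcoer u 0
    have h2 : ⟪gradg u - gradg 0, u - 0⟫ ≤ ‖gradg u - gradg 0‖ * ‖u - 0‖ :=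
      real_inner_le_norm _ _
    have h3 := hsmooth u 0
    rw [hnu] at h1 h2 h3
    nlinarith
  have hL : 0 < L := lt_of_lt_of_le hμ hμL
  -- gradient vanishes at the minimizer
  have hgz : gradg ystar = 0 := by
    have hlm : IsLocalMin g ystar := Filter.Eventually.of_forall hmin
    have h0 := hlm.hasFDerivAt_eq_zero (hgrad ystar).hasFDerivAt
    have := congrArg (InnerProductSpace.toDual ℝ (EuclideanSpace ℝ (Fin q))).symm h0
    simpa using this
  -- PL-type inequality from the descent lemma
  have hPL : ∀ x, ‖gradg x‖ ^ 2 ≤ 2 * L * (g x - g ystar) := by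
    intro x
    have hd := descent_aux g gradg hgrad L hL hsmooth x (-(1/L) • gradg x)
    have e1 : ⟪gradg x, -(1/L) • gradg x⟫ = -(1/L) * ‖gradg x‖ ^ 2 := by
      rw [real_inner_smul_right, real_inner_self_eq_norm_sq]
    have e2 : ‖-(1/L) • gradg x‖ ^ 2 = (1/L) ^ 2 * ‖gradg x‖ ^ 2 := by
      rw [norm_smul]
      simp [abs_of_pos hL]
      ring
    rw [e1, e2] at hd
    have hm := hmin (x + -(1/L) • gradg x)
    have h2L : (0:ℝ) < 2 * L := by linarith
    have e3 : -(1/L) * ‖gradg x‖ ^ 2 + L / 2 * ((1/L) ^ 2 * ‖gradg x‖ ^ 2)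
        = -(1/(2*L)) * ‖gradg x‖ ^ 2 := by
      field_simp
      ring
    have this1 : g ystar ≤ g x - 1/(2*L) * ‖gradg x‖ ^ 2 := by linarith [hm, hd, e3]
    have e5 : 2 * L * (1/(2*L)) * ‖gradg x‖ ^ 2 = ‖gradg x‖ ^ 2 := by
      field_simp
    have := mul_le_mul_of_nonneg_left this1 h2L.le
    linarith [this, e5]
  -- bounds on lam
  have hlamsum : lam * (2 * L + 2 * μ) ≤ 1 := by
    rw [← le_div_iff₀ (by positivity)]
    exact hlam'
  have hlamL : 2 * L * lam ≤ 1 := by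
    linarith [hlamsum, mul_pos hμ hlam, mul_pos hL hlam]
  have hlamμ : 4 * μ * lam ≤ 1 := by
    linarith [hlamsum, mul_pos hμ hlam, mul_pos hL hlam, mul_le_mul_of_nonneg_right hμL hlam.le]
  set s : ℝ := lam * β with hs_def
  have hs : 0 < s := by rw [hs_def]; exact mul_pos hlam hβ
  have hslam : s ≤ lam := by
    rw [hs_def]
    have := mul_nonneg (by linarith : (0:ℝ) ≤ 1 - β) hlam.le
    linarith [this]
  set ρ : ℝ := 1 - (μ / 2) * lam * β with hρ_def
  have hρ0 : 0 ≤ ρ := by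
    have h1 : 0 ≤ (1 / 4 - μ * lam) * β := mul_nonneg (by linarith) hβ.le
    simp only [hρ_def]; linarith [h1, hβ'.le]
  have hρ1 : ρ ≤ 1 := by
    have : 0 < (μ / 2) * lam * β := by positivity
    simp only [hρ_def]; linarith
  clear_value s ρ
  -- one step inequality
  have step : ∀ t : ℕ, ‖y t - s • D t - ystar‖ ^ 2 ≤
      ρ * ‖y t - ystar‖ ^ 2 + (4 / μ) * lam * β * ‖gradg (y t) - D t‖ ^ 2
        - (1 / 2) * lam ^ 2 * β * ‖D t‖ ^ 2 := by
    intro t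
    set a : EuclideanSpace ℝ (Fin q) := y t - ystar with ha
    set d : EuclideanSpace ℝ (Fin q) := gradg (y t) with hd
    set e : EuclideanSpace ℝ (Fin q) := gradg (y t) - D t with he
    have hDt : D t = d - e := by simp [hd, he]
    have hrw : y t - s • D t - ystar = a - s • D t := by
      rw [ha]; abel
    have hexp : ‖a - s • D t‖ ^ 2 = ‖a‖ ^ 2 - 2 * (s * ⟪a, D t⟫) + s ^ 2 * ‖D t‖ ^ 2 := by
      rw [norm_sub_sq_real, real_inner_smul_right, norm_smul]
      simp [abs_of_pos hs]
      ring
    have hinner : ⟪a, D t⟫ = ⟪d, a⟫ - ⟪e, a⟫ := by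
      rw [hDt, real_inner_comm, inner_sub_left]
    -- F1: strong convexity at y t evaluated at ystar
    have hF1 : (g (y t) - g ystar) + (μ / 2) * ‖a‖ ^ 2 ≤ ⟪d, a⟫ := by
      have h := hsc (y t) ystar
      have e1 : ⟪gradg (y t), ystar - y t⟫ = - ⟪d, a⟫ := by
        rw [show ystar - y t = -a by rw [ha, neg_sub], inner_neg_right]
      have e2 : ‖ystar - y t‖ = ‖a‖ := norm_sub_rev _ _
      rw [e1, e2] at h
      linarith
    have hF2 : ‖d‖ ^ 2 ≤ 2 * L * (g (y t) - g ystar) := hPL (y t)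
    have hF3 : ⟪e, a⟫ ≤ ‖e‖ * ‖a‖ := real_inner_le_norm _ _
    have hF4 : -(‖d‖ * ‖e‖) ≤ ⟪d, e⟫ := by
      have := abs_real_inner_le_norm d e
      cases' abs_le.mp this with h1 h2
      linarith
    have hND : ‖D t‖ ^ 2 = ‖d‖ ^ 2 - 2 * ⟪d, e⟫ + ‖e‖ ^ 2 := by
      rw [hDt, norm_sub_sq_real]
    -- scalar bookkeeping
    have hYoung : 2 * (‖e‖ * ‖a‖) ≤ (μ / 2) * ‖a‖ ^ 2 + (2 / μ) * ‖e‖ ^ 2 := by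
      have key : (μ / 2) * ‖a‖ ^ 2 + (2 / μ) * ‖e‖ ^ 2 - 2 * (‖e‖ * ‖a‖)
          = (μ * ‖a‖ - 2 * ‖e‖) ^ 2 / (2 * μ) := by
        field_simp
        ring
      have h2 : (0:ℝ) ≤ (μ * ‖a‖ - 2 * ‖e‖) ^ 2 / (2 * μ) :=
        div_nonneg (sq_nonneg _) (by positivity)
      linarith [key ▸ h2]
    have hD2 : ‖D t‖ ^ 2 ≤ (4 / 3) * ‖d‖ ^ 2 + 4 * ‖e‖ ^ 2 := by
      linarith [sq_nonneg (‖d‖ - 3 * ‖e‖), hND, hF4]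
    have hG : 0 ≤ g (y t) - g ystar := by linarith [hmin (y t)]
    have hkey3 : s ^ 2 * ‖D t‖ ^ 2 + (1 / 2) * lam ^ 2 * β * ‖D t‖ ^ 2
        ≤ 2 * s * (g (y t) - g ystar) + (2 / μ) * s * ‖e‖ ^ 2 := by
      have hc : s ^ 2 + (1 / 2) * lam ^ 2 * β ≤ (3 / 2) * lam * s := by
        simp only [hs_def]
        have := mul_nonneg (mul_nonneg (mul_nonneg hlam.le hlam.le) hβ.le)
          (by linarith : (0:ℝ) ≤ 1 - β)
        linarith [this]
      have hND0 : (0:ℝ) ≤ ‖D t‖ ^ 2 := sq_nonneg _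
      have h1 : s ^ 2 * ‖D t‖ ^ 2 + (1 / 2) * lam ^ 2 * β * ‖D t‖ ^ 2
          ≤ (3 / 2) * lam * s * ((4 / 3) * ‖d‖ ^ 2 + 4 * ‖e‖ ^ 2) := by
        have := mul_le_mul_of_nonneg_right hc hND0
        have h2 := mul_le_mul_of_nonneg_left hD2 (by positivity : (0:ℝ) ≤ (3/2) * lam * s)
        linarith [this, h2]
      have h3 : 2 * lam * s * ‖d‖ ^ 2 ≤ 2 * s * (g (y t) - g ystar) := by
        have h4 := mul_le_mul_of_nonneg_left hF2 (by positivity : (0:ℝ) ≤ lam * s)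
        have h5 : (2 * L * lam - 1) * (2 * s * (g (y t) - g ystar)) ≤ 0 :=
          mul_nonpos_of_nonpos_of_nonneg (by linarith)
            (by linarith [mul_nonneg hs.le hG])
        linarith [h4, h5]
      have h5 : 6 * lam * s * ‖e‖ ^ 2 ≤ (2 / μ) * s * ‖e‖ ^ 2 := by
        have h6 : 6 * lam ≤ 2 / μ := by
          rw [le_div_iff₀ hμ]; nlinarith
        have := mul_le_mul_of_nonneg_right h6 (mul_nonneg hs.le (sq_nonneg ‖e‖))
        linarith [this]
      linarith [h1, h3, h5]
    -- assemble
    rw [hrw, hexp, hinner]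
    have hEe : ‖gradg (y t) - D t‖ = ‖e‖ := by rw [he]
    rw [hEe]
    have hkey1 : 2 * (s * ⟪e, a⟫) ≤ s * ((μ / 2) * ‖a‖ ^ 2 + (2 / μ) * ‖e‖ ^ 2) := by
      linarith [mul_le_mul_of_nonneg_left hF3 hs.le, mul_le_mul_of_nonneg_left hYoung hs.le]
    have hkey2 : -(2 * (s * ⟪d, a⟫)) ≤ -(2 * s * (g (y t) - g ystar)) - μ * s * ‖a‖ ^ 2 := by
      have := mul_le_mul_of_nonneg_left hF1 hs.le
      linarith [this]
    have eρ : ρ * ‖a‖ ^ 2 = ‖a‖ ^ 2 - (μ / 2) * s * ‖a‖ ^ 2 := by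
      rw [hρ_def, hs_def]; ring
    have eE : (4 / μ) * lam * β * ‖e‖ ^ 2 = (4 / μ) * s * ‖e‖ ^ 2 + (2 / μ) * s * ‖e‖ ^ 2 - (2 / μ) * s * ‖e‖ ^ 2 := by
      rw [hs_def]; ring
    have eY : s * ((μ / 2) * ‖a‖ ^ 2 + (2 / μ) * ‖e‖ ^ 2) = (μ / 2) * s * ‖a‖ ^ 2 + (2 / μ) * s * ‖e‖ ^ 2 := by ring
    have eμ : μ * s * ‖a‖ ^ 2 = 2 * ((μ / 2) * s * ‖a‖ ^ 2) := by ring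
    have eS : (4 / μ) * s * ‖e‖ ^ 2 = 2 * ((2 / μ) * s * ‖e‖ ^ 2) := by ring
    linarith [hkey1, hkey2, hkey3, eρ, eE, eY, eμ, eS]
  -- induction
  have main : ∀ n : ℕ, (∀ t < n, y (t + 1) = y t - s • D t) →
      ‖y n - ystar‖ ^ 2 ≤ ρ ^ n * ‖y 0 - ystar‖ ^ 2
        + (4 / μ) * lam * β * ∑ t ∈ Finset.range n, ‖gradg (y t) - D t‖ ^ 2
        - (1 / 2) * lam ^ 2 * β * ∑ t ∈ Finset.range n, ρ ^ (n - 1 - t) * ‖D t‖ ^ 2 := by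
    intro n
    induction n with
    | zero => intro _; simp
    | succ n ih =>
      intro h
      have ihn := ih (fun t ht => h t (ht.trans (Nat.lt_succ_self n)))
      have hyn := h n (Nat.lt_succ_self n)
      have hstep := step n
      rw [← hyn] at hstep
      have hE0 : (0:ℝ) ≤ ∑ t ∈ Finset.range n, ‖gradg (y t) - D t‖ ^ 2 :=
        Finset.sum_nonneg (fun i _ => sq_nonneg _)
      have hsum1 : ∑ t ∈ Finset.range (n + 1), ‖gradg (y t) - D t‖ ^ 2
          = ∑ t ∈ Finset.range n, ‖gradg (y t) - D t‖ ^ 2 + ‖gradg (y n) - D n‖ ^ 2 :=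
        Finset.sum_range_succ _ n
      have hsum2 : ∑ t ∈ Finset.range (n + 1), ρ ^ (n + 1 - 1 - t) * ‖D t‖ ^ 2
          = ρ * ∑ t ∈ Finset.range n, ρ ^ (n - 1 - t) * ‖D t‖ ^ 2 + ‖D n‖ ^ 2 := by
        rw [Finset.sum_range_succ, Finset.mul_sum]
        congr 1
        · apply Finset.sum_congr rfl
          intro t ht
          have ht' : t < n := Finset.mem_range.mp ht
          have : n + 1 - 1 - t = (n - 1 - t) + 1 := by omega
          rw [this, pow_succ]
          ring
        · have : n + 1 - 1 - n = 0 := by omega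
          rw [this, pow_zero, one_mul]
      have hmul := mul_le_mul_of_nonneg_left ihn hρ0
      have hρE : ρ * ((4 / μ) * lam * β * ∑ t ∈ Finset.range n, ‖gradg (y t) - D t‖ ^ 2)
          ≤ (4 / μ) * lam * β * ∑ t ∈ Finset.range n, ‖gradg (y t) - D t‖ ^ 2 := by
        have hC : (0:ℝ) ≤ (4 / μ) * lam * β * ∑ t ∈ Finset.range n, ‖gradg (y t) - D t‖ ^ 2 := by
          have : (0:ℝ) ≤ (4 / μ) * lam * β := by positivity
          exact mul_nonneg this hE0
        linarith [hC, mul_nonneg (by linarith : (0:ℝ) ≤ 1 - ρ) hC]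
      rw [hsum1, hsum2]
      have hpow : ρ ^ (n + 1) * ‖y 0 - ystar‖ ^ 2 = ρ * (ρ ^ n * ‖y 0 - ystar‖ ^ 2) := by
        rw [pow_succ]; ring
      linarith [hstep, hmul, hρE, hpow]
  exact main T hiter
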